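/- Let κ, μ be constants and let V be a four-times differentiable function such that v = V' satisfies v''' = 6v²v' − 12z v v' + (4z² − 8μ)v' − 8v² + 12z v + 16μ. Then U(x,t) = V((x+2κt)/√(4t)) − κx − κ²t − μ ln t satisfies the dispersive water wave equation U_tt + 2U_t U_xx + 4U_x U_xt + 6U_x² U_xx − U_xxxx = 0 for all t > 0. -/

import Mathlib

/-- Partial derivative with respect to the first (space) variable. -/
noncomputable def pdx (U : ℝ → ℝ → ℝ) (x t : ℝ) : ℝ := deriv (fun y => U y t) x

/-- Partial derivative with respect to the second (time) variable. -/
noncomputable def pdt (U : ℝ → ℝ → ℝ) (x t : ℝ) : ℝ := deriv (fun s => U x s) t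

/-- The dispersive water wave equation
`U_tt + 2 U_t U_xx + 4 U_x U_xt + 6 U_x² U_xx - U_xxxx = 0` at the point `(x,t)`. -/
def DWWEq (U : ℝ → ℝ → ℝ) (x t : ℝ) : Prop :=
  pdt (pdt U) x t + 2 * pdt U x t * pdx (pdx U) x t
    + 4 * pdx U x t * pdt (pdx U) x t
    + 6 * (pdx U x t) ^ 2 * pdx (pdx U) x t
    - pdx (pdx (pdx (pdx U))) x t = 0

/-- The modified Boussinesq equation
`(1/3) U_tt - 2 U_t U_xx - 6 U_x² U_xx + U_xxxx = 0` at the point `(x,t)`. -/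
def MBQEq (U : ℝ → ℝ → ℝ) (x t : ℝ) : Prop :=
  (1 / 3) * pdt (pdt U) x t - 2 * pdt U x t * pdx (pdx U) x t
    - 6 * (pdx U x t) ^ 2 * pdx (pdx U) x t
    + pdx (pdx (pdx (pdx U))) x t = 0

set_option maxHeartbeats 4000000 in
/-- Consistency of the generalized scaling reduction of the DWW equation: if `v = V'`
satisfies `v''' = 6v²v' - 12zvv' + (4z²-8μ)v' - 8v² + 12zv + 16μ`, then
`U(x,t) = V((x+2κt)/√(4t)) - κx - κ²t - μ ln t` solves the DWW equation for `t > 0`. -/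
theorem dww_scaling_reduction_consistency (κ μ : ℝ) (V : ℝ → ℝ) (hV : ContDiff ℝ 4 V)
    (hode : ∀ z : ℝ, iteratedDeriv 3 (deriv V) z =
      6 * (deriv V z) ^ 2 * deriv (deriv V) z
        - 12 * z * (deriv V z) * deriv (deriv V) z
        + (4 * z ^ 2 - 8 * μ) * deriv (deriv V) z
        - 8 * (deriv V z) ^ 2 + 12 * z * (deriv V z) + 16 * μ) :
    ∀ x t : ℝ, 0 < t →
      DWWEq (fun x t =>
        V ((x + 2 * κ * t) / Real.sqrt (4 * t)) - κ * x - κ ^ 2 * t - μ * Real.log t)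
        x t := by
  intro x t ht
  -- differentiability of the successive derivatives of V
  have hD0 : Differentiable ℝ V := hV.differentiable (by norm_num)
  have hC3 : ContDiff ℝ 3 (deriv V) :=
    ((contDiff_succ_iff_deriv).mp (by exact_mod_cast hV)).2.2
  have hD1 : Differentiable ℝ (deriv V) := hC3.differentiable (by norm_num)
  have hC2 : ContDiff ℝ 2 (deriv (deriv V)) :=
    ((contDiff_succ_iff_deriv).mp (by exact_mod_cast hC3)).2.2
  have hD2 : Differentiable ℝ (deriv (deriv V)) := hC2.differentiable (by norm_num)
  have hC1 : ContDiff ℝ 1 (deriv (deriv (deriv V))) :=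
    ((contDiff_succ_iff_deriv).mp (by exact_mod_cast hC2)).2.2
  have hD3 : Differentiable ℝ (deriv (deriv (deriv V))) := hC1.differentiable (by norm_num)
  -- basic facts about the square root
  have hspos : ∀ u : ℝ, 0 < u → 0 < Real.sqrt (4*u) := by
    intro u hu; exact Real.sqrt_pos.mpr (by linarith)
  have hs4 : ∀ u : ℝ, 0 < u → (Real.sqrt (4*u)) ^ 2 = 4*u := by
    intro u hu; exact Real.sq_sqrt (by linarith)
  have hSder : ∀ u : ℝ, 0 < u → HasDerivAt (fun w => Real.sqrt (4*w)) (2 / Real.sqrt (4*u)) u := by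
    intro u hu
    have h1 : HasDerivAt (fun w : ℝ => 4*w) 4 u := by simpa using (hasDerivAt_id u).const_mul (4:ℝ)
    have h2 : HasDerivAt (fun w => Real.sqrt (4*w)) (1/(2*Real.sqrt (4*u)) * 4) u :=
      (Real.hasDerivAt_sqrt (by positivity)).comp u h1
    convert h2 using 1
    have := hspos u hu
    field_simp
    ring
  -- space derivative of the scaling variable
  have hZx : ∀ y u : ℝ, HasDerivAt (fun w => (w + 2*κ*u)/Real.sqrt (4*u))
      (1 / Real.sqrt (4*u)) y := by
    intro y u
    exact ((hasDerivAt_id y).add_const (2*κ*u)).div_const (Real.sqrt (4*u))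
  -- time derivative of the scaling variable
  have hZt : ∀ y u : ℝ, 0 < u → HasDerivAt (fun w => (y + 2*κ*w)/Real.sqrt (4*w))
      (2*κ/Real.sqrt (4*u) - ((y + 2*κ*u)/Real.sqrt (4*u))/(2*u)) u := by
    intro y u hu
    have hnum : HasDerivAt (fun w : ℝ => y + 2*κ*w) (2*κ) u := by
      simpa using ((hasDerivAt_id u).const_mul (2*κ)).const_add y
    have h := hnum.div (hSder u hu) (hspos u hu).ne'
    refine h.congr_deriv ?_
    have key : ∀ s u' N k : ℝ, 0 < s → s^2 = 4*u' →
        2*k/s - (N/s)/(2*u') = (2*k*s - N*(2/s))/s^2 := by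
      intro s u' N k hs h2
      have hu' : u' = s^2/4 := by linarith
      subst hu'
      field_simp
      ring
    exact (key _ _ _ _ (hspos u hu) (hs4 u hu)).symm
  -- first space derivative of U
  have L1 : ∀ y u : ℝ, 0 < u →
      deriv (fun w => V ((w + 2*κ*u)/Real.sqrt (4*u)) - κ*w - κ^2*u - μ*Real.log u) y
        = deriv V ((y + 2*κ*u)/Real.sqrt (4*u)) * (1/Real.sqrt (4*u)) - κ := by
    intro y u hu
    have hcomp : HasDerivAt (fun w => V ((w + 2*κ*u)/Real.sqrt (4*u)))
        (deriv V ((y + 2*κ*u)/Real.sqrt (4*u)) * (1/Real.sqrt (4*u))) y :=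
      (hD0.differentiableAt.hasDerivAt).comp y (hZx y u)
    have h : HasDerivAt (fun w => V ((w + 2*κ*u)/Real.sqrt (4*u)) - κ*w - κ^2*u - μ*Real.log u)
        (deriv V ((y + 2*κ*u)/Real.sqrt (4*u)) * (1/Real.sqrt (4*u)) - κ) y := by
      have h2 := ((hcomp.sub ((hasDerivAt_id y).const_mul κ)).sub_const (κ^2*u)).sub_const
        (μ*Real.log u)
      refine h2.congr_deriv ?_
      ring
    exact h.deriv
  -- time derivative of U
  have L2 : ∀ y u : ℝ, 0 < u →
      deriv (fun w => V ((y + 2*κ*w)/Real.sqrt (4*w)) - κ*y - κ^2*w - μ*Real.log w) u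
        = deriv V ((y + 2*κ*u)/Real.sqrt (4*u))
            * (2*κ/Real.sqrt (4*u) - ((y + 2*κ*u)/Real.sqrt (4*u))/(2*u))
          - κ^2 - μ/u := by
    intro y u hu
    have hcomp : HasDerivAt (fun w => V ((y + 2*κ*w)/Real.sqrt (4*w)))
        (deriv V ((y + 2*κ*u)/Real.sqrt (4*u))
          * (2*κ/Real.sqrt (4*u) - ((y + 2*κ*u)/Real.sqrt (4*u))/(2*u))) u :=
      (hD0.differentiableAt.hasDerivAt).comp u (hZt y u hu)
    have h : HasDerivAt (fun w => V ((y + 2*κ*w)/Real.sqrt (4*w)) - κ*y - κ^2*w - μ*Real.log w)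
        (deriv V ((y + 2*κ*u)/Real.sqrt (4*u))
          * (2*κ/Real.sqrt (4*u) - ((y + 2*κ*u)/Real.sqrt (4*u))/(2*u))
          - κ^2 - μ/u) u := by
      have h2 := (((hcomp.sub_const (κ*y)).sub ((hasDerivAt_id u).const_mul (κ^2))).sub
        ((Real.hasDerivAt_log hu.ne').const_mul μ))
      refine h2.congr_deriv ?_
      field_simp
    exact h.deriv
  -- iterated space derivatives at fixed time t
  have M2 : ∀ y : ℝ,
      deriv (fun w => deriv V ((w + 2*κ*t)/Real.sqrt (4*t)) * (1/Real.sqrt (4*t)) - κ) y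
        = deriv (deriv V) ((y + 2*κ*t)/Real.sqrt (4*t)) * (1/Real.sqrt (4*t))^2 := by
    intro y
    have hcomp : HasDerivAt (fun w => deriv V ((w + 2*κ*t)/Real.sqrt (4*t)))
        (deriv (deriv V) ((y + 2*κ*t)/Real.sqrt (4*t)) * (1/Real.sqrt (4*t))) y :=
      (hD1.differentiableAt.hasDerivAt).comp y (hZx y t)
    have h := (hcomp.mul_const (1/Real.sqrt (4*t))).sub_const κ
    rw [h.deriv]
    ring
  have M3 : ∀ y : ℝ,
      deriv (fun w => deriv (deriv V) ((w + 2*κ*t)/Real.sqrt (4*t)) * (1/Real.sqrt (4*t))^2) y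
        = deriv (deriv (deriv V)) ((y + 2*κ*t)/Real.sqrt (4*t)) * (1/Real.sqrt (4*t))^3 := by
    intro y
    have hcomp : HasDerivAt (fun w => deriv (deriv V) ((w + 2*κ*t)/Real.sqrt (4*t)))
        (deriv (deriv (deriv V)) ((y + 2*κ*t)/Real.sqrt (4*t)) * (1/Real.sqrt (4*t))) y :=
      (hD2.differentiableAt.hasDerivAt).comp y (hZx y t)
    have h := hcomp.mul_const ((1/Real.sqrt (4*t))^2)
    rw [h.deriv]
    ring
  have M4 : ∀ y : ℝ,
      deriv (fun w =>
          deriv (deriv (deriv V)) ((w + 2*κ*t)/Real.sqrt (4*t)) * (1/Real.sqrt (4*t))^3) y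
        = deriv (deriv (deriv (deriv V))) ((y + 2*κ*t)/Real.sqrt (4*t))
            * (1/Real.sqrt (4*t))^4 := by
    intro y
    have hcomp : HasDerivAt (fun w => deriv (deriv (deriv V)) ((w + 2*κ*t)/Real.sqrt (4*t)))
        (deriv (deriv (deriv (deriv V))) ((y + 2*κ*t)/Real.sqrt (4*t)) * (1/Real.sqrt (4*t))) y :=
      (hD3.differentiableAt.hasDerivAt).comp y (hZx y t)
    have h := hcomp.mul_const ((1/Real.sqrt (4*t))^3)
    rw [h.deriv]
    ring
  -- mixed derivative : t-derivative of the first space derivative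
  have HTX :
      deriv (fun u => deriv V ((x + 2*κ*u)/Real.sqrt (4*u)) * (1/Real.sqrt (4*u)) - κ) t
        = deriv (deriv V) ((x + 2*κ*t)/Real.sqrt (4*t))
            * (2*κ/Real.sqrt (4*t) - ((x + 2*κ*t)/Real.sqrt (4*t))/(2*t)) * (1/Real.sqrt (4*t))
          - deriv V ((x + 2*κ*t)/Real.sqrt (4*t)) * (2/Real.sqrt (4*t)^3) := by
    have hA : HasDerivAt (fun u => deriv V ((x + 2*κ*u)/Real.sqrt (4*u)))
        (deriv (deriv V) ((x + 2*κ*t)/Real.sqrt (4*t))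
          * (2*κ/Real.sqrt (4*t) - ((x + 2*κ*t)/Real.sqrt (4*t))/(2*t))) t :=
      (hD1.differentiableAt.hasDerivAt).comp t (hZt x t ht)
    have hB : HasDerivAt (fun u : ℝ => 1/Real.sqrt (4*u))
        ((0 * Real.sqrt (4*t) - 1 * (2/Real.sqrt (4*t)))/(Real.sqrt (4*t))^2) t :=
      (hasDerivAt_const t (1:ℝ)).div (hSder t ht) (hspos t ht).ne'
    have h := (hA.mul hB).sub_const κ
    refine h.deriv.trans ?_
    have hs := hspos t ht
    field_simp
    ring
  -- second time derivative
  have HTT :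
      deriv (fun u => deriv V ((x + 2*κ*u)/Real.sqrt (4*u))
          * (2*κ/Real.sqrt (4*u) - ((x + 2*κ*u)/Real.sqrt (4*u))/(2*u)) - κ^2 - μ/u) t
        = deriv (deriv V) ((x + 2*κ*t)/Real.sqrt (4*t))
            * (2*κ/Real.sqrt (4*t) - ((x + 2*κ*t)/Real.sqrt (4*t))/(2*t))^2
          + deriv V ((x + 2*κ*t)/Real.sqrt (4*t))
            * (((x + 2*κ*t)/Real.sqrt (4*t))/(2*t^2)
              - (2*κ/Real.sqrt (4*t) - ((x + 2*κ*t)/Real.sqrt (4*t))/(2*t))/(2*t)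
              - 4*κ/Real.sqrt (4*t)^3)
          + μ/t^2 := by
    have hA : HasDerivAt (fun u => deriv V ((x + 2*κ*u)/Real.sqrt (4*u)))
        (deriv (deriv V) ((x + 2*κ*t)/Real.sqrt (4*t))
          * (2*κ/Real.sqrt (4*t) - ((x + 2*κ*t)/Real.sqrt (4*t))/(2*t))) t :=
      (hD1.differentiableAt.hasDerivAt).comp t (hZt x t ht)
    have hB : HasDerivAt (fun u : ℝ => 2*κ/Real.sqrt (4*u))
        ((0 * Real.sqrt (4*t) - 2*κ * (2/Real.sqrt (4*t)))/(Real.sqrt (4*t))^2) t :=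
      (hasDerivAt_const t (2*κ)).div (hSder t ht) (hspos t ht).ne'
    have hden : HasDerivAt (fun u : ℝ => 2*u) 2 t := by
      simpa using (hasDerivAt_id t).const_mul (2:ℝ)
    have hC : HasDerivAt (fun u : ℝ => ((x + 2*κ*u)/Real.sqrt (4*u))/(2*u))
        (((2*κ/Real.sqrt (4*t) - ((x + 2*κ*t)/Real.sqrt (4*t))/(2*t)) * (2*t)
          - ((x + 2*κ*t)/Real.sqrt (4*t)) * 2)/(2*t)^2) t :=
      (hZt x t ht).div hden (by positivity)
    have hMu : HasDerivAt (fun u : ℝ => μ/u) ((0 * t - μ * 1)/t^2) t :=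
      (hasDerivAt_const t μ).div (hasDerivAt_id t) ht.ne'
    have h := ((hA.mul (hB.sub hC)).sub_const (κ^2)).sub hMu
    refine h.deriv.trans ?_
    simp only [Pi.sub_apply]
    have hs := hspos t ht
    field_simp
    ring
  -- now assemble everything
  simp only [DWWEq, pdx, pdt]
  have hgt := eventually_gt_nhds ht
  have hevt : (fun u => deriv (fun w =>
        V ((x + 2*κ*w)/Real.sqrt (4*w)) - κ*x - κ^2*w - μ*Real.log w) u)
      =ᶠ[nhds t] (fun u => deriv V ((x + 2*κ*u)/Real.sqrt (4*u))
          * (2*κ/Real.sqrt (4*u) - ((x + 2*κ*u)/Real.sqrt (4*u))/(2*u)) - κ^2 - μ/u) := by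
    filter_upwards [hgt] with u hu
    exact L2 x u hu
  have hevx : (fun u => deriv (fun w =>
        V ((w + 2*κ*u)/Real.sqrt (4*u)) - κ*w - κ^2*u - μ*Real.log u) x)
      =ᶠ[nhds t] (fun u => deriv V ((x + 2*κ*u)/Real.sqrt (4*u)) * (1/Real.sqrt (4*u)) - κ) := by
    filter_upwards [hgt] with u hu
    exact L1 x u hu
  have L1t : ∀ y : ℝ,
      deriv (fun w => V ((w + 2*κ*t)/Real.sqrt (4*t)) - κ*w - κ^2*t - μ*Real.log t) y
        = deriv V ((y + 2*κ*t)/Real.sqrt (4*t)) * (1/Real.sqrt (4*t)) - κ := fun y => L1 y t ht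
  rw [show (2:ℝ) * κ = 2*κ from rfl]  -- no-op, keep structure
  rw [hevt.deriv_eq, hevx.deriv_eq]
  simp only [L1t, M2, M3, M4, L2 x t ht, HTX, HTT]
  -- pure algebra from here
  have e3 : iteratedDeriv 3 (deriv V) = deriv (deriv (deriv (deriv V))) := by
    show iteratedDeriv (2+1) (deriv V) = _
    rw [iteratedDeriv_succ]
    show deriv (iteratedDeriv (1+1) (deriv V)) = _
    rw [iteratedDeriv_succ]
    show deriv (deriv (iteratedDeriv (0+1) (deriv V))) = _
    rw [iteratedDeriv_succ, iteratedDeriv_zero]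
  have hOD := hode ((x + 2*κ*t)/Real.sqrt (4*t))
  rw [e3] at hOD
  have hs2 := hs4 t ht
  have hs0 := hspos t ht
  set s := Real.sqrt (4*t) with hsdef
  set z := (x + 2*κ*t)/s with hzdef
  clear_value s z
  rw [hOD]
  have htval : t = s^2/4 := by rw [hs2]; ring
  rw [htval]
  have hs0' : s ≠ 0 := hs0.ne'
  field_simp
  ring
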